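/- Let f : [0,1] → [0,1] be a continuous strictly increasing piecewise monomial bijection whose pieces have positive integer degrees d₁ ≤ ⋯ ≤ dₙ with break-points 0 = t₀ < ⋯ < tₙ = 1, let d = dₙ and suppose every d_i divides d, and set n_i = d/d_i. Suppose further d₁ = 1. Then the function g : [0,1] → [0,1] defined so that g is piecewise monomial with the same break-points t_i and degree n_i on (t_{i−1}, t_i), normalized by g(0) = 0 and continuity, satisfies g(1) = ∏_{i=1}^{n-1} t_i^{n_i − n_{i+1}} ≤ 1, with equality if and only if n = 1. -/

import Mathlib

/-- Lemma 3.12 context: let `f` be a continuous strictly increasing piecewise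
monomial bijection of `[0,1]` with break-points `tᵢ` and strictly increasing
positive degrees `dᵢ` dividing `d = dₙ`, with `d₁ = 1`, and let `g` be the
piecewise monomial function with the same break-points and degrees
`nᵢ = d/dᵢ`, normalized by `g(0) = 0` and continuity (so `β₁ = 1`). Then
`g(1) = ∏_{i=1}^{n−1} tᵢ^{nᵢ − n_{i+1}} ≤ 1`, with equality iff `n = 1`. -/
theorem inverse_degree_profile_value
    (n dd : ℕ) (hn : 1 ≤ n) (hdd : 1 ≤ dd)
    (t : ℕ → ℝ) (α β : ℕ → ℝ) (dv nv : ℕ → ℕ) (f g : ℝ → ℝ)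
    (ht0 : t 0 = 0) (htn : t n = 1) (htmono : ∀ i < n, t i < t (i + 1))
    (hαpos : ∀ i, 1 ≤ i → i ≤ n → 0 < α i)
    (hdpos : ∀ i, 1 ≤ i → i ≤ n → 0 < dv i)
    (hd1 : dv 1 = 1) (hdn : dv n = dd)
    (hdinc : ∀ i, 1 ≤ i → i < n → dv i < dv (i + 1))
    (hdvd : ∀ i, 1 ≤ i → i ≤ n → dv i ∣ dd)
    (hnv : ∀ i, 1 ≤ i → i ≤ n → nv i = dd / dv i)
    (hf : ∀ i, 1 ≤ i → i ≤ n → ∀ s ∈ Set.Icc (t (i - 1)) (t i), f s = α i * s ^ dv i)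
    (hfc : ContinuousOn f (Set.Icc 0 1)) (hfm : StrictMonoOn f (Set.Icc 0 1))
    (hfb : Set.BijOn f (Set.Icc 0 1) (Set.Icc 0 1))
    (hg : ∀ i, 1 ≤ i → i ≤ n → ∀ s ∈ Set.Icc (t (i - 1)) (t i), g s = β i * s ^ nv i)
    (hg0 : g 0 = 0) (hβ1 : β 1 = 1)
    (hgcont : ∀ i, 1 ≤ i → i < n → β i * t i ^ nv i = β (i + 1) * t i ^ nv (i + 1)) :
    g 1 = ∏ i ∈ Finset.Ico 1 n, t i ^ (nv i - nv (i + 1)) ∧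
    g 1 ≤ 1 ∧ (g 1 = 1 ↔ n = 1) := by

  -- monotonicity facts about t
  have hts : ∀ i j, i < j → j ≤ n → t i < t j := by
    intro i j
    induction j with
    | zero => intro h _; exact absurd h (Nat.not_lt_zero i)
    | succ j ih =>
      intro hij hjn
      rcases Nat.lt_succ_iff_lt_or_eq.mp hij with h | h
      · exact lt_trans (ih h (by omega)) (htmono j (by omega))
      · rw [h]; exact htmono j (by omega)
  have htpos : ∀ i, 1 ≤ i → i ≤ n → 0 < t i := by
    intro i h1 h2
    have := hts 0 i h1 h2
    linarith [this, ht0.ge, ht0.le]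
  have htlt1 : ∀ i, i < n → t i < 1 := by
    intro i h
    have := hts i n h le_rfl
    rwa [htn] at this
  have htle1 : ∀ i, i ≤ n → t i ≤ 1 := by
    intro i h
    rcases eq_or_lt_of_le h with h | h
    · rw [h, htn]
    · exact le_of_lt (htlt1 i h)
  have htnonneg : ∀ i, i ≤ n → 0 ≤ t i := by
    intro i h
    rcases Nat.eq_zero_or_pos i with h0 | h0
    · rw [h0, ht0]
    · exact le_of_lt (htpos i h0 h)
  -- exponents strictly decrease
  have hnvlt : ∀ i, 1 ≤ i → i < n → nv (i + 1) < nv i := by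
    intro i h1 h2
    rw [hnv i h1 (le_of_lt h2), hnv (i+1) (by omega) h2]
    rw [Nat.lt_div_iff_mul_lt' (hdvd i h1 (le_of_lt h2))]
    have hq : 0 < dd / dv (i+1) :=
      Nat.div_pos (Nat.le_of_dvd (by omega) (hdvd (i+1) (by omega) h2))
        (hdpos (i+1) (by omega) h2)
    calc dv i * (dd / dv (i+1)) < dv (i+1) * (dd / dv (i+1)) :=
          Nat.mul_lt_mul_of_lt_of_le (hdinc i h1 h2) le_rfl hq
      _ = dd := Nat.mul_div_cancel' (hdvd (i+1) (by omega) h2)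
  -- β formula
  have hβeq : ∀ k, 1 ≤ k → k ≤ n →
      β k = ∏ i ∈ Finset.Ico 1 k, t i ^ (nv i - nv (i + 1)) := by
    intro k h1 h2
    induction k with
    | zero => omega
    | succ k ih =>
      rcases Nat.eq_zero_or_pos k with h0 | h0
      · subst h0; simpa using hβ1
      · have hkn : k < n := h2
        have hrec := hgcont k h0 hkn
        have htk : (0:ℝ) < t k := htpos k h0 (le_of_lt hkn)
        have hβk := ih h0 (le_of_lt hkn)
        have hexp : nv (k+1) ≤ nv k := le_of_lt (hnvlt k h0 hkn)
        have hpow : t k ^ nv k = t k ^ (nv k - nv (k+1)) * t k ^ nv (k+1) := by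
          rw [← pow_add]; congr 1; omega
        have : β (k+1) * t k ^ nv (k+1) = β k * t k ^ (nv k - nv (k+1)) * t k ^ nv (k+1) := by
          rw [← hrec, hpow]; ring
        have hβ : β (k+1) = β k * t k ^ (nv k - nv (k+1)) :=
          mul_right_cancel₀ (pow_ne_zero _ (ne_of_gt htk)) this
        rw [hβ, hβk, Finset.prod_Ico_succ_top h0]
  -- g 1 = β n
  have hg1 : g 1 = β n := by
    have h1mem : (1:ℝ) ∈ Set.Icc (t (n-1)) (t n) := by
      constructor
      · rw [← htn]; exact (hts (n-1) n (by omega) le_rfl).le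
      · rw [htn]
    have := hg n hn le_rfl 1 h1mem
    simpa using this
  have hg1eq : g 1 = ∏ i ∈ Finset.Ico 1 n, t i ^ (nv i - nv (i + 1)) := by
    rw [hg1, hβeq n hn le_rfl]
  refine ⟨hg1eq, ?_, ?_⟩
  · rw [hg1eq]
    apply Finset.prod_le_one
    · intro i hi
      simp only [Finset.mem_Ico] at hi
      exact pow_nonneg (htnonneg i (le_of_lt hi.2)) _
    · intro i hi
      simp only [Finset.mem_Ico] at hi
      exact pow_le_one₀ (htnonneg i (le_of_lt hi.2)) (htle1 i (le_of_lt hi.2))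
  · rw [hg1eq]
    constructor
    · intro hprod
      by_contra hne
      have h2 : 2 ≤ n := by omega
      have h1n : 1 < n := h2
      rw [Finset.prod_eq_prod_Ico_succ_bot h1n] at hprod
      have hfac : t 1 ^ (nv 1 - nv 2) < 1 := by
        apply pow_lt_one₀ (htnonneg 1 (by omega)) (htlt1 1 h1n)
        have h21 : nv 2 < nv 1 := hnvlt 1 le_rfl h1n
        omega
      have hrest : ∏ i ∈ Finset.Ico 2 n, t i ^ (nv i - nv (i + 1)) ≤ 1 := by
        apply Finset.prod_le_one
        · intro i hi
          simp only [Finset.mem_Ico] at hi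
          exact pow_nonneg (htnonneg i (le_of_lt hi.2)) _
        · intro i hi
          simp only [Finset.mem_Ico] at hi
          exact pow_le_one₀ (htnonneg i (le_of_lt hi.2)) (htle1 i (le_of_lt hi.2))
      have hrestnn : 0 ≤ ∏ i ∈ Finset.Ico 2 n, t i ^ (nv i - nv (i + 1)) :=
        Finset.prod_nonneg fun i hi => by
          simp only [Finset.mem_Ico] at hi
          exact pow_nonneg (htnonneg i (le_of_lt hi.2)) _
      nlinarith [pow_nonneg (htnonneg 1 (le_of_lt h1n)) (nv 1 - nv 2)]
    · intro h; subst h; simp
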